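/- For the case d = 0, the shuffle product (f1·f2)(x_1,...,x_{n+m}) = sum over shuffles of f1(x_I)·f2(x_J)·∏_{k,l}(x_{j_l}-x_{i_k})^{-1} (where the Vandermonde-type factor appears with exponent -1) makes the algebra supercommutative: for homogeneous symmetric polynomials f1 of degree k1 in n variables and f2 of degree k2 in m variables, f1·f2 = (-1)^{nm} f2·f1. -/

import Mathlib

/- STATEMENT 1: For d = 0 the shuffle product (with Vandermonde factor appearing with
   exponent -1) is supercommutative: for homogeneous symmetric f1 (degree k1, n variables)
   and f2 (degree k2, m variables), f1·f2 = (-1)^{nm} f2·f1. -/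

namespace Stmt1

noncomputable section

lemma compl_card {n m : ℕ} (S : Finset (Fin (n + m))) (hS : S.card = n) :
    Sᶜ.card = m := by
  rw [Finset.card_compl, hS, Fintype.card_fin]
  omega

/-- The shuffle product with parameter `d` (exponent `d - 1 : ℤ` on the Vandermonde factors;
for `d = 0` this exponent is `-1`). -/
def shuffleMul (d : ℕ) {n m : ℕ} (f1 : (Fin n → ℚ) → ℚ) (f2 : (Fin m → ℚ) → ℚ) :
    (Fin (n + m) → ℚ) → ℚ := fun x =>
  ∑ S ∈ (Finset.powersetCard n (Finset.univ : Finset (Fin (n + m)))).attach,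
    f1 (fun a => x (S.1.orderEmbOfFin ((Finset.mem_powersetCard.mp S.2).2) a)) *
      f2 (fun b => x ((S.1)ᶜ.orderEmbOfFin
        (compl_card S.1 ((Finset.mem_powersetCard.mp S.2).2)) b)) *
      ∏ a : Fin n, ∏ b : Fin m,
        (x ((S.1)ᶜ.orderEmbOfFin (compl_card S.1 ((Finset.mem_powersetCard.mp S.2).2)) b) -
            x (S.1.orderEmbOfFin ((Finset.mem_powersetCard.mp S.2).2) a)) ^ ((d : ℤ) - 1)

lemma mapCompl {α β : Type*} [Fintype α] [Fintype β] [DecidableEq α] [DecidableEq β]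
    (e : α ≃ β) (s : Finset α) :
    (s.map e.toEmbedding)ᶜ = sᶜ.map e.toEmbedding := by
  ext a
  simp [Finset.mem_map_equiv]

lemma ordEmb_transport {n m c : ℕ} (s : Finset (Fin (n + m))) (hs : s.card = c)
    (t : Finset (Fin (m + n))) (ht : t.card = c)
    (hst : t = s.map (finCongr (Nat.add_comm m n)).symm.toEmbedding) (i : Fin c) :
    (finCongr (Nat.add_comm m n)) (t.orderEmbOfFin ht i) = s.orderEmbOfFin hs i := by
  refine congrFun (Finset.orderEmbOfFin_unique
    (f := fun j => (finCongr (Nat.add_comm m n)) (t.orderEmbOfFin ht j)) hs ?_ ?_) i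
  · intro j
    have hj : t.orderEmbOfFin ht j ∈ s.map (finCongr (Nat.add_comm m n)).symm.toEmbedding := by
      rw [← hst]; exact Finset.orderEmbOfFin_mem t ht j
    rw [Finset.mem_map_equiv] at hj
    simpa using hj
  · intro a b hab
    have := (t.orderEmbOfFin ht).strictMono hab
    simpa only [Fin.lt_def, finCongr_apply, Fin.coe_cast] using this

lemma sign_prod {n m : ℕ} (P : Fin n → ℚ) (Q : Fin m → ℚ) :
    ∏ a : Fin m, ∏ b : Fin n, (P b - Q a) ^ ((0:ℤ) - 1) =
      (-1 : ℚ) ^ (n * m) * ∏ a : Fin n, ∏ b : Fin m, (Q b - P a) ^ ((0:ℤ) - 1) := by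
  rw [Finset.prod_comm]
  have key : ∀ (b : Fin n), ∏ a : Fin m, (P b - Q a) ^ ((0:ℤ) - 1) =
      (-1 : ℚ) ^ m * ∏ a : Fin m, (Q a - P b) ^ ((0:ℤ) - 1) := by
    intro b
    calc ∏ a : Fin m, (P b - Q a) ^ ((0:ℤ) - 1)
        = ∏ a : Fin m, ((-1) * (Q a - P b) ^ ((0:ℤ) - 1)) := by
          refine Finset.prod_congr rfl fun a _ => ?_
          have h : P b - Q a = -(Q a - P b) := by ring
          norm_num
          rw [h, inv_neg]
      _ = (-1 : ℚ) ^ m * ∏ a : Fin m, (Q a - P b) ^ ((0:ℤ) - 1) := by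
          rw [Finset.prod_mul_distrib, Finset.prod_const, Finset.card_univ, Fintype.card_fin]
  simp_rw [key]
  rw [Finset.prod_mul_distrib, Finset.prod_const, Finset.card_univ, Fintype.card_fin,
    ← pow_mul, Nat.mul_comm]

/-- Supercommutativity for `d = 0`. -/
theorem stmt1 {n m k1 k2 : ℕ}
    (f1 : (Fin n → ℚ) → ℚ) (f2 : (Fin m → ℚ) → ℚ)
    (h1 : ∀ (σ : Equiv.Perm (Fin n)) (y : Fin n → ℚ), f1 (fun i => y (σ i)) = f1 y)
    (h2 : ∀ (σ : Equiv.Perm (Fin m)) (y : Fin m → ℚ), f2 (fun i => y (σ i)) = f2 y)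
    (hom1 : ∀ (c : ℚ) (y : Fin n → ℚ), f1 (fun i => c * y i) = c ^ k1 * f1 y)
    (hom2 : ∀ (c : ℚ) (y : Fin m → ℚ), f2 (fun i => c * y i) = c ^ k2 * f2 y)
    (x : Fin (n + m) → ℚ) :
    shuffleMul 0 f1 f2 x =
      (-1 : ℚ) ^ (n * m) *
        shuffleMul 0 f2 f1 (fun i => x (finCongr (Nat.add_comm m n) i)) := by
  classical
  set e : Fin (m + n) ≃ Fin (n + m) := finCongr (Nat.add_comm m n) with he
  unfold shuffleMul
  rw [Finset.mul_sum]
  refine Finset.sum_bij'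
    (i := fun S _ => (⟨(S.1)ᶜ.map e.symm.toEmbedding, ?_⟩ :
      {T // T ∈ Finset.powersetCard m (Finset.univ : Finset (Fin (m + n)))}))
    (j := fun T _ => (⟨((T.1)ᶜ.map e.toEmbedding), ?_⟩ :
      {S // S ∈ Finset.powersetCard n (Finset.univ : Finset (Fin (n + m)))}))
    (fun _ _ => Finset.mem_attach _ _) (fun _ _ => Finset.mem_attach _ _) ?_ ?_ ?_
  · -- membership for i
    rw [Finset.mem_powersetCard]
    refine ⟨Finset.subset_univ _, ?_⟩
    rw [Finset.card_map]
    exact compl_card S.1 ((Finset.mem_powersetCard.mp S.2).2)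
  · -- membership for j
    rw [Finset.mem_powersetCard]
    refine ⟨Finset.subset_univ _, ?_⟩
    rw [Finset.card_map]
    exact compl_card (n := m) (m := n) T.1 ((Finset.mem_powersetCard.mp T.2).2)
  · -- left inverse
    intro S _
    apply Subtype.ext
    ext a
    simp [Finset.mem_map_equiv]
  · -- right inverse
    intro T _
    apply Subtype.ext
    ext a
    simp [Finset.mem_map_equiv]
  · -- main equality
    intro S _
    have hScard : S.1.card = n := (Finset.mem_powersetCard.mp S.2).2
    set T : Finset (Fin (m + n)) := (S.1)ᶜ.map e.symm.toEmbedding with hT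
    have hTcard : T.card = m := by
      rw [hT, Finset.card_map]; exact compl_card S.1 hScard
    have hTc : Tᶜ = S.1.map e.symm.toEmbedding := by
      rw [hT, mapCompl e.symm, compl_compl]
    have hTccard : Tᶜ.card = n := by rw [hTc, Finset.card_map, hScard]
    have hB : ∀ b : Fin m, e (T.orderEmbOfFin hTcard b) = (S.1)ᶜ.orderEmbOfFin (compl_card S.1 hScard) b :=
      fun b => ordEmb_transport (S.1)ᶜ (compl_card S.1 hScard) T hTcard hT b
    have hA : ∀ a : Fin n, e (Tᶜ.orderEmbOfFin hTccard a) = S.1.orderEmbOfFin hScard a :=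
      fun a => ordEmb_transport S.1 hScard Tᶜ hTccard hTc a
    simp only [Nat.cast_zero, ← hT, hB, hA]
    rw [sign_prod (fun a => x (S.1.orderEmbOfFin hScard a))
      (fun b => x ((S.1)ᶜ.orderEmbOfFin (compl_card S.1 hScard) b))]
    have hsq : ((-1 : ℚ) ^ (n * m)) * ((-1 : ℚ) ^ (n * m)) = 1 := by
      rw [← pow_add]
      exact Even.neg_one_pow ⟨n * m, rfl⟩
    have haux : ∀ (c A B P : ℚ), c * c = 1 → A * B * P = c * (B * A * (c * P)) := by
      intro c A B P h
      linear_combination (-(A * B * P)) * h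
    exact haux _ _ _ _ hsq

end

end Stmt1
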